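/- arXiv:1310.4976 — 2 statements merged into one kernel-verified Lean document; each statement's English description precedes it below -/
import Mathlib

section
/- For every integer d ≥ 1, the map Ψ' : ℂ³ → ℂ⁴ given by Ψ'(t',y,v) = (t'²y − t'·v^d, y, t'·y − v^d, v) satisfies the following: (1) for all (t',y,v) ∈ ℂ³ the point Ψ'(t',y,v) lies in Y_d, i.e. g_d(Ψ'(t',y,v)) = 0; (2) Ψ' is injective on the set {(t',y,v) ∈ ℂ³ : (y,v) ≠ (0,0)}; (3) for (y,v) ≠ (0,0) the point Ψ'(t',y,v) is nonzero. -/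
/-- For every integer `d ≥ 1`, the second chart
`Ψ'(t',y,v) = (t'²y − t'·v^d, y, t'·y − v^d, v)` of the parametrization of
`Y_d \ {0}`:
(1) lands in `Y_d = {x·y − z·(z + v^d) = 0}`;
(2) is injective on `{(t',y,v) : (y,v) ≠ (0,0)}`;
(3) sends points with `(y,v) ≠ (0,0)` to nonzero points. -/
theorem links_of_singularities_stmt_4 (d : ℕ) (hd : 1 ≤ d)
    (Ψ' : ℂ × ℂ × ℂ → ℂ × ℂ × ℂ × ℂ)
    (hΨ' : ∀ t' y v : ℂ, Ψ' (t', y, v) =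
      (t' ^ 2 * y - t' * v ^ d, y, t' * y - v ^ d, v)) :
    (∀ t' y v : ℂ,
      (Ψ' (t', y, v)).1 * (Ψ' (t', y, v)).2.1 -
        (Ψ' (t', y, v)).2.2.1 *
          ((Ψ' (t', y, v)).2.2.1 + (Ψ' (t', y, v)).2.2.2 ^ d) = 0) ∧
    Set.InjOn Ψ' {q : ℂ × ℂ × ℂ | q.2 ≠ 0} ∧
    (∀ t' y v : ℂ, (y, v) ≠ ((0 : ℂ), (0 : ℂ)) → Ψ' (t', y, v) ≠ 0) := by
  refine ⟨?_, ?_, ?_⟩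
  · intro t' y v
    simp only [hΨ']
    ring
  · rintro ⟨t1, y1, v1⟩ h1 ⟨t2, y2, v2⟩ h2 heq
    simp only [hΨ', Prod.mk.injEq] at heq
    obtain ⟨e1, ey, e3, ev⟩ := heq
    subst ey ev
    have hyv : (y1, v1) ≠ ((0:ℂ), 0) := h1
    by_cases hy : y1 = 0
    · have hv : v1 ≠ 0 := by
        intro hv; exact hyv (by simp [hy, hv])
      subst hy
      have hvd : v1 ^ d ≠ 0 := pow_ne_zero _ hv
      have : t1 * v1 ^ d = t2 * v1 ^ d := by
        have := e1; ring_nf at this ⊢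
        linear_combination -this
      have ht : t1 = t2 := mul_right_cancel₀ hvd this
      simp [ht]
    · have : t1 * y1 = t2 * y1 := by linear_combination e3
      have ht : t1 = t2 := mul_right_cancel₀ hy this
      simp [ht]
  · intro t' y v h hz
    apply h
    rw [hΨ'] at hz
    have hy : y = 0 := congrArg (fun p => p.2.1) hz
    have hv : v = 0 := congrArg (fun p => p.2.2.2) hz
    simp [hy, hv]
end

section
/- For every integer d ≥ 1, the two charts cover the punctured hypersurface Y_d \ {0}: every point (x,y,z,v) ∈ ℂ⁴ with (x,y,z,v) ≠ 0 and x·y = z·(z + v^d) lies either in the image of Ψ restricted to {(t,x,v) : (x,v) ≠ (0,0)} or in the image of Ψ' restricted to {(t',y,v) : (y,v) ≠ (0,0)}. More precisely: if x ≠ 0 then (x,y,z,v) = Ψ(z/x, x, v); if y ≠ 0 then (x,y,z,v) = Ψ'((z + v^d)/y, y, v); and if x = y = 0 then v ≠ 0 and either z = 0 and the point equals Ψ(0,0,v), or z = −v^d and the point equals Ψ'(0,0,v). -/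
/-- For every integer `d ≥ 1`, the two charts
`Ψ(t,x,v) = (x, t²x + t·v^d, t·x, v)` and
`Ψ'(t',y,v) = (t'²y − t'·v^d, y, t'·y − v^d, v)`
cover the punctured hypersurface `Y_d \ {0}`: every nonzero point with
`x·y = z·(z + v^d)` is in the image of `Ψ` restricted to `{(x,v) ≠ (0,0)}` or
of `Ψ'` restricted to `{(y,v) ≠ (0,0)}`; more precisely, if `x ≠ 0` the point
is `Ψ(z/x, x, v)`, if `y ≠ 0` it is `Ψ'((z + v^d)/y, y, v)`, and if
`x = y = 0` then `v ≠ 0` and either `z = 0` and the point is `Ψ(0,0,v)`, or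
`z = −v^d` and the point is `Ψ'(0,0,v)`. -/
theorem links_of_singularities_stmt_5 (d : ℕ) (hd : 1 ≤ d)
    (Ψ Ψ' : ℂ × ℂ × ℂ → ℂ × ℂ × ℂ × ℂ)
    (hΨ : ∀ t x v : ℂ, Ψ (t, x, v) =
      (x, t ^ 2 * x + t * v ^ d, t * x, v))
    (hΨ' : ∀ t' y v : ℂ, Ψ' (t', y, v) =
      (t' ^ 2 * y - t' * v ^ d, y, t' * y - v ^ d, v))
    (x y z v : ℂ) (hp : ((x, y, z, v) : ℂ × ℂ × ℂ × ℂ) ≠ 0)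
    (heq : x * y = z * (z + v ^ d)) :
    ((∃ q : ℂ × ℂ × ℂ, q.2 ≠ 0 ∧ Ψ q = (x, y, z, v)) ∨
      (∃ q : ℂ × ℂ × ℂ, q.2 ≠ 0 ∧ Ψ' q = (x, y, z, v))) ∧
    (x ≠ 0 → ((x, y, z, v) : ℂ × ℂ × ℂ × ℂ) = Ψ (z / x, x, v)) ∧
    (y ≠ 0 → ((x, y, z, v) : ℂ × ℂ × ℂ × ℂ) = Ψ' ((z + v ^ d) / y, y, v)) ∧
    (x = 0 → y = 0 → v ≠ 0 ∧
      ((z = 0 ∧ ((x, y, z, v) : ℂ × ℂ × ℂ × ℂ) = Ψ (0, 0, v)) ∨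
        (z = -v ^ d ∧ ((x, y, z, v) : ℂ × ℂ × ℂ × ℂ) = Ψ' (0, 0, v)))) := by
  have hx : x ≠ 0 → ((x, y, z, v) : ℂ × ℂ × ℂ × ℂ) = Ψ (z / x, x, v) := by
    intro hx
    rw [hΨ]
    have h2 : (z / x) ^ 2 * x + (z / x) * v ^ d = y := by
      field_simp
      ring_nf
      linear_combination -heq
    have h3 : z / x * x = z := div_mul_cancel₀ z hx
    rw [h2, h3]
  have hy : y ≠ 0 → ((x, y, z, v) : ℂ × ℂ × ℂ × ℂ) = Ψ' ((z + v ^ d) / y, y, v) := by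
    intro hy
    rw [hΨ']
    have h1 : ((z + v ^ d) / y) ^ 2 * y - ((z + v ^ d) / y) * v ^ d = x := by
      field_simp
      ring_nf
      linear_combination -heq
    have h3 : (z + v ^ d) / y * y - v ^ d = z := by
      rw [div_mul_cancel₀ _ hy]; ring
    rw [h1, h3]
  have hxy : x = 0 → y = 0 → v ≠ 0 ∧
      ((z = 0 ∧ ((x, y, z, v) : ℂ × ℂ × ℂ × ℂ) = Ψ (0, 0, v)) ∨
        (z = -v ^ d ∧ ((x, y, z, v) : ℂ × ℂ × ℂ × ℂ) = Ψ' (0, 0, v))) := by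
    intro hx0 hy0
    subst hx0 hy0
    have hz' : z = 0 ∨ z + v ^ d = 0 := mul_eq_zero.mp (by linear_combination -heq)
    have hv : v ≠ 0 := by
      intro hv0
      subst hv0
      have hd' : (0:ℂ) ^ d = 0 := zero_pow (by omega)
      rw [hd'] at hz'
      have : z = 0 := by rcases hz' with h | h; exact h; simpa using h
      subst this
      exact hp rfl
    refine ⟨hv, ?_⟩
    rcases hz' with h | h
    · left
      subst h
      rw [hΨ]
      norm_num
    · right
      have hz2 : z = -v ^ d := by linear_combination h
      subst hz2
      rw [hΨ']
      norm_num
  refine ⟨?_, hx, hy, hxy⟩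
  by_cases hx0 : x = 0
  · by_cases hy0 : y = 0
    · obtain ⟨hv, hcase⟩ := hxy hx0 hy0
      rcases hcase with ⟨_, he⟩ | ⟨_, he⟩
      · left; exact ⟨(0, 0, v), by simp [hv, Prod.ext_iff], he.symm⟩
      · right; exact ⟨(0, 0, v), by simp [hv, Prod.ext_iff], he.symm⟩
    · right; exact ⟨((z + v ^ d) / y, y, v), by simp [hy0, Prod.ext_iff], (hy hy0).symm⟩
  · left; exact ⟨(z / x, x, v), by simp [hx0, Prod.ext_iff], (hx hx0).symm⟩
end
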